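/- arXiv:2202.09187 — 2 statements merged into one kernel-verified Lean document; each statement's English description precedes it below -/
import Mathlib

section
/- Let n ≥ 1. For all A, B ∈ O^±(n,n,ℤ), the integer matrix H_{A,B} := Bᵀ·(B_A)_low·B − (Bᵀ·B_A·B)_low is symmetric, i.e. H_{A,B} = H_{A,B}ᵀ. -/
open Matrix

/-- Square integer matrices of size `2n`. -/
abbrev Mat (n : ℕ) := Matrix (Fin (n + n)) (Fin (n + n)) ℤ

/-- The `2n × 2n` block matrix `[[A, B], [C, D]]`. -/
def fromB {n : ℕ} (A B C D : Matrix (Fin n) (Fin n) ℤ) : Mat n :=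
  Matrix.reindex finSumFinEquiv finSumFinEquiv (Matrix.fromBlocks A B C D)

/-- The block matrix `I = [[0, Eₙ], [Eₙ, 0]]`. -/
def Imat (n : ℕ) : Mat n := fromB 0 1 1 0

/-- Membership in the integral split pseudo-orthogonal group `O^±(n,n,ℤ)`:
`Aᵀ I A = I` or `Aᵀ I A = -I`. -/
def IsOpm (n : ℕ) (A : Mat n) : Prop :=
  Aᵀ * Imat n * A = Imat n ∨ Aᵀ * Imat n * A = -Imat n

/-- The block matrix `J = [[0, 0], [Eₙ, 0]]`. -/
def Jmat (n : ℕ) : Mat n := fromB 0 0 1 0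

/-- The sign `iso(A) ∈ {1, -1}` with `Aᵀ I A = iso(A) • I` (for `A ∈ O^±(n,n,ℤ)`). -/
noncomputable def iso (n : ℕ) (A : Mat n) : ℤ :=
  if Aᵀ * Imat n * A = Imat n then 1 else -1

/-- For a (skew-symmetric) integer matrix `M`, its strictly lower triangular part
`M_low`, with `(M_low)ᵢⱼ = Mᵢⱼ` for `i > j` and `0` otherwise. -/
def lowm {N : ℕ} (M : Matrix (Fin N) (Fin N) ℤ) : Matrix (Fin N) (Fin N) ℤ :=
  Matrix.of fun i j => if j < i then M i j else 0

/-- The diagonal of a matrix, as a vector `M^{diag}`. -/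
def diagv {N : ℕ} (M : Matrix (Fin N) (Fin N) ℤ) : Fin N → ℤ := fun i => M i i

/-- The skew-symmetric matrix `B_A := iso(A)·J − Aᵀ J A`. -/
noncomputable def Bmat (n : ℕ) (A : Mat n) : Mat n := iso n A • Jmat n - Aᵀ * Jmat n * A

lemma lowm_transpose_eq {N : ℕ} (M : Matrix (Fin N) (Fin N) ℤ)
    (h : Mᵀ = -M) : (lowm M)ᵀ = lowm M - M := by
  ext i j
  have hij : M i j = -M j i := by
    have := congrFun (congrFun h j) i
    simpa [Matrix.transpose_apply] using this
  simp only [Matrix.sub_apply, Matrix.transpose_apply, lowm, Matrix.of_apply]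
  rcases lt_trichotomy i j with hlt | heq | hlt
  · simp [hlt, not_lt.mpr hlt.le]; omega
  · subst heq
    simp [lt_irrefl]; omega
  · simp [hlt, not_lt.mpr hlt.le]

lemma Jmat_add_transpose (n : ℕ) : Jmat n + (Jmat n)ᵀ = Imat n := by
  simp only [Jmat, Imat, fromB, Matrix.reindex_apply, Matrix.transpose_submatrix,
    Matrix.fromBlocks_transpose]
  ext i j
  cases h1 : finSumFinEquiv.symm i <;> cases h2 : finSumFinEquiv.symm j <;>
    simp [Matrix.submatrix_apply, h1, h2, Matrix.one_apply]

lemma iso_spec (n : ℕ) (A : Mat n) (hA : IsOpm n A) :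
    Aᵀ * Imat n * A = iso n A • Imat n := by
  unfold iso
  by_cases hc : Aᵀ * Imat n * A = Imat n
  · simp [hc]
  · rcases hA with h | h
    · exact absurd h hc
    · rw [if_neg hc, h]; simp

lemma Bmat_skew (n : ℕ) (A : Mat n) (hA : IsOpm n A) :
    (Bmat n A)ᵀ = -(Bmat n A) := by
  have h1 := Jmat_add_transpose n
  have h2 := iso_spec n A hA
  unfold Bmat
  have hJt : (Jmat n)ᵀ = Imat n - Jmat n := by rw [← h1]; abel
  rw [Matrix.transpose_sub, Matrix.transpose_smul,
    Matrix.transpose_mul, Matrix.transpose_mul, Matrix.transpose_transpose, hJt]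
  rw [smul_sub, Matrix.sub_mul, Matrix.mul_sub, ← Matrix.mul_assoc, ← Matrix.mul_assoc, h2]
  abel

/-- For `A, B ∈ O^±(n,n,ℤ)`, the integer matrix
`H_{A,B} := Bᵀ·(B_A)_low·B − (Bᵀ·B_A·B)_low` is symmetric. -/
theorem statement10 (n : ℕ) (hn : 1 ≤ n) (A B : Mat n)
    (hA : IsOpm n A) (hB : IsOpm n B) :
    (Bᵀ * lowm (Bmat n A) * B - lowm (Bᵀ * Bmat n A * B))ᵀ
      = Bᵀ * lowm (Bmat n A) * B - lowm (Bᵀ * Bmat n A * B) := by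
  set M := Bmat n A with hM
  have hMs : Mᵀ = -M := Bmat_skew n A hA
  have hNs : (Bᵀ * M * B)ᵀ = -(Bᵀ * M * B) := by
    rw [Matrix.transpose_mul, Matrix.transpose_mul, Matrix.transpose_transpose, hMs]
    simp [Matrix.mul_assoc]
  have hL : (lowm M)ᵀ = lowm M - M := lowm_transpose_eq M hMs
  have hN : (lowm (Bᵀ * M * B))ᵀ = lowm (Bᵀ * M * B) - Bᵀ * M * B :=
    lowm_transpose_eq _ hNs
  rw [Matrix.transpose_sub, Matrix.transpose_mul, Matrix.transpose_mul,
    Matrix.transpose_transpose, hL, hN]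
  rw [Matrix.sub_mul, Matrix.mul_sub]
  simp only [← Matrix.mul_assoc]
  abel
end

section
/- Let n ≥ 1. The 3-cocycle m vanishes on the subgroup e(so(n,ℤ)) ⊂ O(n,n,ℤ): for all skew-symmetric matrices A, B, C ∈ ℤ^{n×n}, one has m_{e^A, e^B, e^C} = 0, where e^B := [[Eₙ,0],[B,Eₙ]]. Moreover (B_{e^A·e^B})_low = (e^B)ᵀ·(B_{e^A})_low·e^B + (B_{e^B})_low for all skew-symmetric A, B ∈ ℤ^{n×n}. -/
open Matrix

/-- The integer vector `-2·m_{A,B,C}`. -/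
noncomputable def mint (n : ℕ) (A B C : Mat n) : Fin (n + n) → ℤ :=
  ((A⁻¹)ᵀ * (B⁻¹)ᵀ * (C⁻¹)ᵀ).mulVec
    (Cᵀ.mulVec (diagv (Bᵀ * lowm (Bmat n A) * B))
      + diagv (Cᵀ * lowm (Bmat n (A * B)) * C)
      - iso n A • diagv (Cᵀ * lowm (Bmat n B) * C)
      - diagv (Cᵀ * Bᵀ * lowm (Bmat n A) * B * C))

/-- The 3-cocycle
`m_{A,B,C} := −(1/2)·(A⁻¹)ᵀ(B⁻¹)ᵀ(C⁻¹)ᵀ·( Cᵀ·(Bᵀ(B_A)_low B)^{diag} + (Cᵀ(B_{AB})_low C)^{diag}`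
`− iso(A)·(Cᵀ(B_B)_low C)^{diag} − (CᵀBᵀ(B_A)_low B C)^{diag} )` as a vector in `ℝ^{2n}`. -/
noncomputable def mvec (n : ℕ) (A B C : Mat n) : Fin (n + n) → ℝ :=
  fun i => -(1 / 2 : ℝ) * (mint n A B C i : ℝ)

/-- The block matrix `e^B = [[Eₙ, 0], [B, Eₙ]]`. -/
def expB (n : ℕ) (B : Matrix (Fin n) (Fin n) ℤ) : Mat n := fromB 1 0 B 1


section Aux

variable {n : ℕ}

lemma fromB_mul (A B C D E F G H : Matrix (Fin n) (Fin n) ℤ) :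
    fromB A B C D * fromB E F G H =
      fromB (A*E+B*G) (A*F+B*H) (C*E+D*G) (C*F+D*H) := by
  simp [fromB, Matrix.reindex_apply, Matrix.submatrix_mul_equiv,
    Matrix.fromBlocks_multiply]

lemma fromB_transpose (A B C D : Matrix (Fin n) (Fin n) ℤ) :
    (fromB A B C D)ᵀ = fromB Aᵀ Cᵀ Bᵀ Dᵀ := by
  simp [fromB, Matrix.reindex_apply, Matrix.transpose_submatrix,
    Matrix.fromBlocks_transpose]

lemma fromB_add (A B C D E F G H : Matrix (Fin n) (Fin n) ℤ) :
    fromB A B C D + fromB E F G H = fromB (A+E) (B+F) (C+G) (D+H) := by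
  simp [fromB, Matrix.reindex_apply, ← Matrix.fromBlocks_add]
  ext i j
  simp [Matrix.submatrix_apply]

lemma fromB_add0 (X Y : Matrix (Fin n) (Fin n) ℤ) :
    fromB (X + Y) 0 0 0 = fromB X 0 0 0 + fromB Y 0 0 0 := by
  rw [fromB_add]; norm_num

lemma fromB_sub (A B C D E F G H : Matrix (Fin n) (Fin n) ℤ) :
    fromB A B C D - fromB E F G H = fromB (A-E) (B-F) (C-G) (D-H) := by
  rw [sub_eq_iff_eq_add, fromB_add, sub_add_cancel, sub_add_cancel,
    sub_add_cancel, sub_add_cancel]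

lemma fromB_cc (A B C D : Matrix (Fin n) (Fin n) ℤ) (a b : Fin n) :
    fromB A B C D (Fin.castAdd n a) (Fin.castAdd n b) = A a b := by
  show Matrix.fromBlocks A B C D (finSumFinEquiv.symm (Fin.castAdd n a))
      (finSumFinEquiv.symm (Fin.castAdd n b)) = A a b
  rw [finSumFinEquiv_symm_apply_castAdd,
    finSumFinEquiv_symm_apply_castAdd]
  rfl

lemma fromB_cn (A B C D : Matrix (Fin n) (Fin n) ℤ) (a b : Fin n) :
    fromB A B C D (Fin.castAdd n a) (Fin.natAdd n b) = B a b := by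
  show Matrix.fromBlocks A B C D (finSumFinEquiv.symm (Fin.castAdd n a))
      (finSumFinEquiv.symm (Fin.natAdd n b)) = B a b
  rw [finSumFinEquiv_symm_apply_castAdd,
    finSumFinEquiv_symm_apply_natAdd]
  rfl

lemma fromB_nc (A B C D : Matrix (Fin n) (Fin n) ℤ) (a b : Fin n) :
    fromB A B C D (Fin.natAdd n a) (Fin.castAdd n b) = C a b := by
  show Matrix.fromBlocks A B C D (finSumFinEquiv.symm (Fin.natAdd n a))
      (finSumFinEquiv.symm (Fin.castAdd n b)) = C a b
  rw [finSumFinEquiv_symm_apply_natAdd,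
    finSumFinEquiv_symm_apply_castAdd]
  rfl

lemma fromB_nn (A B C D : Matrix (Fin n) (Fin n) ℤ) (a b : Fin n) :
    fromB A B C D (Fin.natAdd n a) (Fin.natAdd n b) = D a b := by
  show Matrix.fromBlocks A B C D (finSumFinEquiv.symm (Fin.natAdd n a))
      (finSumFinEquiv.symm (Fin.natAdd n b)) = D a b
  rw [finSumFinEquiv_symm_apply_natAdd,
    finSumFinEquiv_symm_apply_natAdd]
  rfl

lemma lowm_apply {N : ℕ} (M : Matrix (Fin N) (Fin N) ℤ) (i j : Fin N) :
    lowm M i j = if j < i then M i j else 0 := rfl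

lemma lowm_fromB (M : Matrix (Fin n) (Fin n) ℤ) :
    lowm (fromB M 0 0 0) = fromB (lowm M) 0 0 0 := by
  have h : ∀ i j : Fin (n+n), lowm (fromB M 0 0 0) i j = fromB (lowm M) 0 0 0 i j := by
    intro i j
    refine Fin.addCases (fun a => ?_) (fun a => ?_) i <;>
      refine Fin.addCases (fun b => ?_) (fun b => ?_) j
    · rw [lowm_apply, fromB_cc, fromB_cc, lowm_apply]
      simp only [Fin.lt_def, Fin.coe_castAdd]
    · rw [lowm_apply, fromB_cn, fromB_cn]
      simp
    · rw [lowm_apply, fromB_nc, fromB_nc]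
      simp
    · rw [lowm_apply, fromB_nn, fromB_nn]
      simp
  exact Matrix.ext h

lemma diagv_fromB_lowm (M : Matrix (Fin n) (Fin n) ℤ) :
    diagv (fromB (lowm M) 0 0 0) = 0 := by
  funext i
  refine Fin.addCases (fun a => ?_) (fun a => ?_) i
  · show fromB (lowm M) 0 0 0 (Fin.castAdd n a) (Fin.castAdd n a) = 0
    rw [fromB_cc, lowm_apply]
    simp
  · show fromB (lowm M) 0 0 0 (Fin.natAdd n a) (Fin.natAdd n a) = 0
    rw [fromB_nn]
    simp

lemma lowm_add (M N : Matrix (Fin n) (Fin n) ℤ) :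
    lowm (M + N) = lowm M + lowm N := by
  ext i j
  simp [lowm]
  split <;> simp

lemma diagv_add {N : ℕ} (M P : Matrix (Fin N) (Fin N) ℤ) :
    diagv (M + P) = diagv M + diagv P := by
  funext i; simp [diagv]

lemma expB_transpose (A : Matrix (Fin n) (Fin n) ℤ) :
    (expB n A)ᵀ = fromB 1 Aᵀ 0 1 := by
  simp [expB, fromB_transpose]

lemma expB_mul (A B : Matrix (Fin n) (Fin n) ℤ) :
    expB n A * expB n B = expB n (A + B) := by
  simp [expB, fromB_mul]

lemma iso_expB (A : Matrix (Fin n) (Fin n) ℤ) (hA : Aᵀ = -A) :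
    iso n (expB n A) = 1 := by
  unfold iso
  rw [if_pos]
  rw [expB_transpose, Imat, expB, fromB_mul, fromB_mul, hA]
  simp

lemma Bmat_expB (A : Matrix (Fin n) (Fin n) ℤ) (hA : Aᵀ = -A) :
    Bmat n (expB n A) = fromB A 0 0 0 := by
  unfold Bmat
  rw [iso_expB A hA, one_smul, expB_transpose, Jmat, expB, fromB_mul, fromB_mul,
    fromB_sub, hA]
  simp

lemma conj_expB (L B : Matrix (Fin n) (Fin n) ℤ) :
    (expB n B)ᵀ * fromB L 0 0 0 * expB n B = fromB L 0 0 0 := by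
  rw [expB_transpose, expB, fromB_mul, fromB_mul]
  simp

end Aux

/-- The 3-cocycle `m` vanishes on the subgroup `e(so(n,ℤ)) ⊂ O(n,n,ℤ)`:
`m_{e^A,e^B,e^C} = 0` for all skew-symmetric `A, B, C ∈ ℤ^{n×n}`. Moreover
`(B_{e^A·e^B})_low = (e^B)ᵀ·(B_{e^A})_low·e^B + (B_{e^B})_low` for all skew-symmetric
`A, B ∈ ℤ^{n×n}`. -/
theorem statement17 (n : ℕ) (hn : 1 ≤ n) :
    (∀ A B C : Matrix (Fin n) (Fin n) ℤ, Aᵀ = -A → Bᵀ = -B → Cᵀ = -C →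
      mvec n (expB n A) (expB n B) (expB n C) = 0) ∧
    (∀ A B : Matrix (Fin n) (Fin n) ℤ, Aᵀ = -A → Bᵀ = -B →
      lowm (Bmat n (expB n A * expB n B))
        = (expB n B)ᵀ * lowm (Bmat n (expB n A)) * expB n B
          + lowm (Bmat n (expB n B))) := by
  constructor
  · intro A B C hA hB hC
    have hAB : (A + B)ᵀ = -(A + B) := by rw [transpose_add, hA, hB]; abel
    have LA := Bmat_expB A hA
    have LB := Bmat_expB B hB
    have hzero : ((expB n C)ᵀ.mulVec (diagv ((expB n B)ᵀ * lowm (Bmat n (expB n A)) * expB n B))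
      + diagv ((expB n C)ᵀ * lowm (Bmat n (expB n A * expB n B)) * expB n C)
      - iso n (expB n A) • diagv ((expB n C)ᵀ * lowm (Bmat n (expB n B)) * expB n C)
      - diagv ((expB n C)ᵀ * (expB n B)ᵀ * lowm (Bmat n (expB n A)) * expB n B * expB n C)) = 0 := by
      rw [LA, LB, lowm_fromB, lowm_fromB, conj_expB, diagv_fromB_lowm, Matrix.mulVec_zero,
        expB_mul, Bmat_expB (A+B) hAB, lowm_fromB, lowm_add, fromB_add0, iso_expB A hA]
      have hmid : (expB n C)ᵀ * (expB n B)ᵀ * fromB (lowm A) 0 0 0 * expB n B * expB n C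
          = (expB n C)ᵀ * fromB (lowm A) 0 0 0 * expB n C := by
        have : (expB n B)ᵀ * fromB (lowm A) 0 0 0 * expB n B = fromB (lowm A) 0 0 0 :=
          conj_expB _ _
        calc (expB n C)ᵀ * (expB n B)ᵀ * fromB (lowm A) 0 0 0 * expB n B * expB n C
            = (expB n C)ᵀ * ((expB n B)ᵀ * fromB (lowm A) 0 0 0 * expB n B) * expB n C := by
              noncomm_ring
          _ = (expB n C)ᵀ * fromB (lowm A) 0 0 0 * expB n C := by rw [this]
      rw [hmid, Matrix.mul_add, Matrix.add_mul, diagv_add, one_smul]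
      abel
    unfold mvec mint
    rw [hzero, Matrix.mulVec_zero]
    funext i
    simp
  · intro A B hA hB
    have hAB : (A + B)ᵀ = -(A + B) := by rw [transpose_add, hA, hB]; abel
    rw [expB_mul, Bmat_expB (A+B) hAB, Bmat_expB A hA, Bmat_expB B hB,
      lowm_fromB, lowm_fromB, lowm_fromB, conj_expB, lowm_add, fromB_add0]
end
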